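/- If Σ_B = Xᵀ·Σ_A·X for a permutation matrix X, then the row space of Σ_B equals the row space of Σ_A multiplied by X; hence B = A·X, i.e., B and A are permutation equivalent via X. -/

import Mathlib

open Matrix

/-- The orthogonal complement (dual code) of a linear code `U ⊆ F^n` with respect to the
standard bilinear form `⟨x, y⟩ = ∑ i, x i * y i`. -/
def dualCode {F : Type*} [Field F] {n : ℕ} (U : Submodule F (Fin n → F)) :
    Submodule F (Fin n → F) where
  carrier := {z | ∀ u ∈ U, ∑ i, u i * z i = 0}
  add_mem' := by
    intro a b ha hb u hu
    have h1 := ha u hu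
    have h2 := hb u hu
    simp only [Set.mem_setOf_eq] at *
    calc ∑ i, u i * (a + b) i = (∑ i, u i * a i) + ∑ i, u i * b i := by
          rw [← Finset.sum_add_distrib]
          exact Finset.sum_congr rfl fun i _ => by simp [mul_add]
      _ = 0 := by rw [h1, h2, add_zero]
  zero_mem' := by
    intro u hu
    simp
  smul_mem' := by
    intro c a ha u hu
    have h := ha u hu
    simp only [Set.mem_setOf_eq] at *
    calc ∑ i, u i * (c • a) i = c * ∑ i, u i * a i := by
          rw [Finset.mul_sum]
          exact Finset.sum_congr rfl fun i _ => by simp [smul_eq_mul]; ring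
      _ = 0 := by rw [h, mul_zero]



open Matrix in
lemma rowSpaceAux {F : Type*} [Field F] {n k : ℕ} (U : Submodule F (Fin n → F))
    (G : Matrix (Fin k) (Fin n) F) (hind : LinearIndependent F G)
    (hspan : Submodule.span F (Set.range G) = U)
    (hhull : U ⊓ dualCode U = ⊥) :
    LinearMap.range (Matrix.vecMulLinear (Gᵀ * (G * Gᵀ)⁻¹ * G)) = U := by
  have hspan' : Submodule.span F (Set.range G.row) = U := hspan
  have hunit : IsUnit (G * Gᵀ) := by
    rw [← Matrix.vecMul_injective_iff_isUnit, Matrix.vecMul_injective_iff,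
      Fintype.linearIndependent_iff]
    intro c hc
    have hc' : c ᵥ* (G * Gᵀ) = 0 := by
      have : ∑ i, c i • (G * Gᵀ).row i = c ᵥ* (G * Gᵀ) := by
        ext j; simp [Matrix.vecMul, dotProduct, Finset.sum_apply, Matrix.row]
      rwa [this] at hc
    set w : Fin n → F := c ᵥ* G with hw
    have hwU : w ∈ U := by
      rw [← hspan']
      have := (range_vecMulLinear G).le (LinearMap.mem_range_self _ c)
      simpa using this
    have hwD : w ∈ dualCode U := by
      intro u hu
      rw [← hspan', ← range_vecMulLinear G] at hu
      obtain ⟨d, rfl⟩ := hu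
      have h0 : (G * Gᵀ) *ᵥ c = 0 := by
        have hsym : (G * Gᵀ)ᵀ = G * Gᵀ := by
          rw [Matrix.transpose_mul, Matrix.transpose_transpose]
        calc (G * Gᵀ) *ᵥ c = (G * Gᵀ)ᵀ *ᵥ c := by rw [hsym]
          _ = c ᵥ* (G * Gᵀ) := Matrix.mulVec_transpose _ _
          _ = 0 := hc'
      have : ∑ i, (Matrix.vecMulLinear G d) i * w i
          = d ⬝ᵥ ((G * Gᵀ) *ᵥ c) := by
        simp only [Matrix.vecMulLinear_apply, hw]
        rw [← Matrix.mulVec_transpose G c]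
        show (d ᵥ* G) ⬝ᵥ (Gᵀ *ᵥ c) = _
        rw [Matrix.dotProduct_mulVec, Matrix.vecMul_vecMul, ← Matrix.dotProduct_mulVec]
      rw [this, h0, dotProduct_zero]
    have : w = 0 := by
      have := hhull ▸ (Submodule.mem_inf.mpr ⟨hwU, hwD⟩)
      simpa using this
    intro i
    have hinj := Matrix.vecMul_injective_iff.mpr hind
    have : c = 0 := by
      apply hinj
      simpa [Matrix.vecMul_zero] using (hw ▸ this : c ᵥ* G = 0)
    exact congrFun this i
  have hproj : G * (Gᵀ * (G * Gᵀ)⁻¹ * G) = G := by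
    rw [← Matrix.mul_assoc, ← Matrix.mul_assoc,
      Matrix.mul_nonsing_inv _ ((Matrix.isUnit_iff_isUnit_det _).mp hunit), Matrix.one_mul]
  apply le_antisymm
  · rintro _ ⟨v, rfl⟩
    rw [← hspan', ← range_vecMulLinear G]
    exact ⟨v ᵥ* (Gᵀ * (G * Gᵀ)⁻¹), by
      simp [Matrix.vecMulLinear_apply, Matrix.vecMul_vecMul]⟩
  · intro u hu
    rw [← hspan', ← range_vecMulLinear G] at hu
    obtain ⟨d, rfl⟩ := hu
    refine ⟨d ᵥ* G, ?_⟩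
    simp only [Matrix.vecMulLinear_apply, Matrix.vecMul_vecMul]
    rw [hproj]

open Matrix in
lemma conjAux {F : Type*} [Field F] {n : ℕ} (M X : Matrix (Fin n) (Fin n) F)
    (hX : IsUnit X) :
    LinearMap.range (Matrix.vecMulLinear (Xᵀ * M * X)) =
      Submodule.map (Matrix.vecMulLinear X) (LinearMap.range (Matrix.vecMulLinear M)) := by
  have hXT : Function.Surjective (Xᵀ.vecMul) := by
    rw [Matrix.vecMul_surjective_iff_isUnit]
    exact (Matrix.isUnit_transpose X).mpr hX
  ext w
  simp only [LinearMap.mem_range, Submodule.mem_map, Matrix.vecMulLinear_apply]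
  constructor
  · rintro ⟨v, rfl⟩
    exact ⟨(v ᵥ* Xᵀ) ᵥ* M, ⟨v ᵥ* Xᵀ, rfl⟩, by
      simp [Matrix.vecMul_vecMul, Matrix.mul_assoc]⟩
  · rintro ⟨_, ⟨u, rfl⟩, rfl⟩
    obtain ⟨v, hv⟩ := hXT u
    exact ⟨v, by rw [← hv]; simp [Matrix.vecMul_vecMul, Matrix.mul_assoc]⟩

/-- If `Σ_B = Xᵀ Σ_A X` for a permutation matrix `X`, then the row space
of `Σ_B` equals the row space of `Σ_A` multiplied by `X`; hence `B = A·X`, i.e. `B` and `A`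
are permutation equivalent via `X`. -/
theorem statement11 {F : Type*} [Field F] {n k : ℕ}
    (A B : Submodule F (Fin n → F))
    (GA GB : Matrix (Fin k) (Fin n) F)
    (hAind : LinearIndependent F GA)
    (hAspan : Submodule.span F (Set.range GA) = A)
    (hBind : LinearIndependent F GB)
    (hBspan : Submodule.span F (Set.range GB) = B)
    (hAhull : A ⊓ dualCode A = ⊥)
    (hBhull : B ⊓ dualCode B = ⊥)
    (σ : Equiv.Perm (Fin n))
    (h : GBᵀ * (GB * GBᵀ)⁻¹ * GB =
      (σ.permMatrix F)ᵀ * (GAᵀ * (GA * GAᵀ)⁻¹ * GA) * σ.permMatrix F) :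
    LinearMap.range (Matrix.vecMulLinear (GBᵀ * (GB * GBᵀ)⁻¹ * GB)) =
      Submodule.map (Matrix.vecMulLinear (σ.permMatrix F))
        (LinearMap.range (Matrix.vecMulLinear (GAᵀ * (GA * GAᵀ)⁻¹ * GA))) ∧
    B = Submodule.map (Matrix.vecMulLinear (σ.permMatrix F)) A := by
  have hA := rowSpaceAux A GA hAind hAspan hAhull
  have hB := rowSpaceAux B GB hBind hBspan hBhull
  have hXunit : IsUnit (σ.permMatrix F) := by
    rw [Matrix.isUnit_iff_isUnit_det, Matrix.det_permutation]
    rcases Int.units_eq_one_or (Equiv.Perm.sign σ) with hs | hs <;> simp [hs]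
  have hconj := conjAux (GAᵀ * (GA * GAᵀ)⁻¹ * GA) (σ.permMatrix F) hXunit
  have h1 : LinearMap.range (Matrix.vecMulLinear (GBᵀ * (GB * GBᵀ)⁻¹ * GB)) =
      Submodule.map (Matrix.vecMulLinear (σ.permMatrix F))
        (LinearMap.range (Matrix.vecMulLinear (GAᵀ * (GA * GAᵀ)⁻¹ * GA))) := by
    rw [h]; exact hconj
  exact ⟨h1, by rw [← hB, h1, hA]⟩
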